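/- Let λ ∈ ℝ, ω ∈ (0, ∞], and let x, θ : ℝ → ℝ be differentiable on [0, ω) with x(0) = 0, θ(0) = 0, and satisfying for all s ∈ [0, ω): x'(s) = cos θ(s) and θ'(s) sin θ(s) = x(s)(cos θ(s) + λ). Then for every s ∈ [0, ω): 1 − cos θ(s) = x(s)²/2 + λ·∫₀ˢ x(t) dt. -/

import Mathlib

open Set intervalIntegral

/-- The first integral of the generating-curve system: if `x(0) = θ(0) = 0`,
`x' = cos θ` and `θ' sin θ = x (cos θ + λ)` on `[0, ω)`, then
`1 − cos θ(s) = x(s)²/2 + λ ∫₀ˢ x(t) dt` on `[0, ω)`. -/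
theorem rotational_translator_first_integral
    (lam : ℝ) (ω : EReal) (hω : 0 < ω)
    (x θ θ' : ℝ → ℝ)
    (hx0 : x 0 = 0) (hθ0 : θ 0 = 0)
    (hx : ∀ s : ℝ, 0 ≤ s → (s : EReal) < ω →
      HasDerivWithinAt x (Real.cos (θ s)) {r : ℝ | 0 ≤ r ∧ (r : EReal) < ω} s)
    (hθ : ∀ s : ℝ, 0 ≤ s → (s : EReal) < ω →
      HasDerivWithinAt θ (θ' s) {r : ℝ | 0 ≤ r ∧ (r : EReal) < ω} s)
    (heq : ∀ s : ℝ, 0 ≤ s → (s : EReal) < ω →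
      θ' s * Real.sin (θ s) = x s * (Real.cos (θ s) + lam)) :
    ∀ s : ℝ, 0 ≤ s → (s : EReal) < ω →
      1 - Real.cos (θ s) = x s ^ 2 / 2 + lam * ∫ t in (0 : ℝ)..s, x t := by
  intro s hs0 hsω
  set S : Set ℝ := {r : ℝ | 0 ≤ r ∧ (r : EReal) < ω} with hS
  have hsub : Icc (0 : ℝ) s ⊆ S := by
    intro r hr
    exact ⟨hr.1, lt_of_le_of_lt (EReal.coe_le_coe_iff.mpr hr.2) hsω⟩
  -- membership facts
  have hmem : ∀ r ∈ Icc (0 : ℝ) s, 0 ≤ r ∧ (r : EReal) < ω := fun r hr => hsub hr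
  -- the function F
  set F : ℝ → ℝ := fun t => 1 - Real.cos (θ t) - x t ^ 2 / 2 with hF
  -- continuity on Icc
  have hθc : ContinuousOn θ (Icc (0 : ℝ) s) := fun t ht =>
    ((hθ t (hmem t ht).1 (hmem t ht).2).mono hsub).continuousWithinAt
  have hxc : ContinuousOn x (Icc (0 : ℝ) s) := fun t ht =>
    ((hx t (hmem t ht).1 (hmem t ht).2).mono hsub).continuousWithinAt
  have hFc : ContinuousOn F (Icc (0 : ℝ) s) := by
    apply ContinuousOn.sub
    · exact (continuousOn_const.sub (Real.continuous_cos.comp_continuousOn hθc))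
    · exact ((hxc.pow 2).div_const 2)
  -- derivative of F within Ioi t for t ∈ Ioo 0 s
  have hFd : ∀ t ∈ Ioo (0 : ℝ) s, HasDerivWithinAt F (lam * x t) (Ioi t) t := by
    intro t ht
    have ht' : t ∈ Icc (0 : ℝ) s := ⟨le_of_lt ht.1, le_of_lt ht.2⟩
    have h0 : 0 ≤ t := ht'.1
    have hω' : (t : EReal) < ω := (hmem t ht').2
    have hSmem : S ∈ nhdsWithin t (Ioi t) := by
      apply Filter.mem_of_superset (Ioc_mem_nhdsGT_of_mem ⟨le_refl t, ht.2⟩)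
      intro r hr
      exact hsub ⟨le_trans h0 (le_of_lt hr.1), hr.2⟩
    have hθd : HasDerivWithinAt θ (θ' t) (Ioi t) t :=
      (hθ t h0 hω').mono_of_mem_nhdsWithin hSmem
    have hxd : HasDerivWithinAt x (Real.cos (θ t)) (Ioi t) t :=
      (hx t h0 hω').mono_of_mem_nhdsWithin hSmem
    have hcos : HasDerivWithinAt (fun r => Real.cos (θ r))
        (-Real.sin (θ t) * θ' t) (Ioi t) t :=
      (Real.hasDerivAt_cos (θ t)).comp_hasDerivWithinAt t hθd
    have hsq : HasDerivWithinAt (fun r => x r ^ 2 / 2)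
        ((2 * x t ^ 1 * Real.cos (θ t)) / 2) (Ioi t) t := (hxd.pow 2).div_const 2
    have := ((hasDerivWithinAt_const t (Ioi t) (1 : ℝ)).sub hcos).sub hsq
    refine this.congr_deriv ?_
    have h1 := heq t h0 hω'
    ring_nf
    ring_nf at h1
    nlinarith [h1]
  -- x is interval integrable on [0,s]
  have hint : IntervalIntegrable (fun t => lam * x t) MeasureTheory.volume 0 s := by
    apply ContinuousOn.intervalIntegrable
    rw [uIcc_of_le hs0]
    exact continuousOn_const.mul hxc
  have key : ∫ t in (0:ℝ)..s, lam * x t = F s - F 0 :=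
    integral_eq_sub_of_hasDeriv_right_of_le hs0 hFc hFd hint
  rw [intervalIntegral.integral_const_mul] at key
  have hF0 : F 0 = 0 := by simp [hF, hθ0, hx0]
  rw [hF0, sub_zero] at key
  rw [key]
  simp only [hF]
  ring
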